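/- Let F_a and F_b be real polynomials of total degree at most 4 in two variables, and let p = (c,d) ∈ ℝ² be a double base point of the pencil, i.e. F_a, ∂F_a/∂u, ∂F_a/∂v, F_b, ∂F_b/∂u and ∂F_b/∂v all vanish at (c,d). Then for every (u,v) ∈ ℝ² at which −4G₁ − G₂ ≠ 0, the point (x,y) = ι_p(u,v) (the generalised Manin involution with degree parameter D = 4, so z = 2G₁/(−4G₁ − G₂)) satisfies F_a(x,y)·F_b(u,v) = F_a(u,v)·F_b(x,y); that is, ι_p maps each curve of the quartic pencil αF_a + βF_b = 0 to itself. -/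

import Mathlib

open MvPolynomial

/-- Evaluation of a bivariate polynomial at a point of the plane. -/
noncomputable def pev (F : MvPolynomial (Fin 2) ℝ) (w : ℝ × ℝ) : ℝ :=
  eval ![w.1, w.2] F

/-- First directional quantity `F⁽¹⁾ = (c−u)Fᵤ + (d−v)Fᵥ` at `w = (u,v)`, direction point `p = (c,d)`. -/
noncomputable def d1 (F : MvPolynomial (Fin 2) ℝ) (p w : ℝ × ℝ) : ℝ :=
  (p.1 - w.1) * pev (pderiv (0 : Fin 2) F) w + (p.2 - w.2) * pev (pderiv (1 : Fin 2) F) w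

/-- Second directional quantity `F⁽²⁾` at `w = (u,v)`, direction point `p = (c,d)`. -/
noncomputable def d2 (F : MvPolynomial (Fin 2) ℝ) (p w : ℝ × ℝ) : ℝ :=
  (p.1 - w.1) ^ 2 * pev (pderiv (0 : Fin 2) (pderiv (0 : Fin 2) F)) w
    + 2 * (p.1 - w.1) * (p.2 - w.2) * pev (pderiv (1 : Fin 2) (pderiv (0 : Fin 2) F)) w
    + (p.2 - w.2) ^ 2 * pev (pderiv (1 : Fin 2) (pderiv (1 : Fin 2) F)) w

/-- `G₁ = F_a·F_b⁽¹⁾ − F_a⁽¹⁾·F_b`. -/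
noncomputable def G1 (Fa Fb : MvPolynomial (Fin 2) ℝ) (p w : ℝ × ℝ) : ℝ :=
  pev Fa w * d1 Fb p w - d1 Fa p w * pev Fb w

/-- `G₂ = F_a·F_b⁽²⁾ − F_a⁽²⁾·F_b`. -/
noncomputable def G2 (Fa Fb : MvPolynomial (Fin 2) ℝ) (p w : ℝ × ℝ) : ℝ :=
  pev Fa w * d2 Fb p w - d2 Fa p w * pev Fb w

/-- The defining denominator `2(2−D)G₁ − G₂` of the generalised Manin involution. -/
noncomputable def den (Fa Fb : MvPolynomial (Fin 2) ℝ) (D : ℕ) (p w : ℝ × ℝ) : ℝ :=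
  2 * (2 - (D : ℝ)) * G1 Fa Fb p w - G2 Fa Fb p w

/-- The generalised Manin involution `ι_p(u,v) = (u,v) + z·(p − (u,v))`
with `z = 2G₁ / (2(2−D)G₁ − G₂)`. -/
noncomputable def manin (Fa Fb : MvPolynomial (Fin 2) ℝ) (D : ℕ) (p w : ℝ × ℝ) : ℝ × ℝ :=
  w + (2 * G1 Fa Fb p w / den Fa Fb D p w) • (p - w)

namespace ManinAux

open Polynomial

/-- Symmetry of second partial derivatives. -/
lemma pderiv_comm (i j : Fin 2) (F : MvPolynomial (Fin 2) ℝ) :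
    pderiv i (pderiv j F) = pderiv j (pderiv i F) := by
  induction F using MvPolynomial.induction_on' with
  | monomial s a =>
      by_cases hij : i = j
      · subst hij; rfl
      · simp only [pderiv_monomial]
        rw [Finsupp.tsub_apply, Finsupp.tsub_apply,
          Finsupp.single_eq_of_ne' hij, Finsupp.single_eq_of_ne' (Ne.symm hij)]
        congr 1
        · rw [tsub_tsub, tsub_tsub, add_comm]
        · simp only [Nat.sub_zero]; ring
  | add f g hf hg => simp [hf, hg]

/-- The parametrised line through `w` (at `t = 0`) and `p` (at `t = 1`), as a
pair of univariate polynomials. -/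
noncomputable def lg (p w : ℝ × ℝ) : Fin 2 → Polynomial ℝ :=
  ![Polynomial.C w.1 + Polynomial.X * Polynomial.C (p.1 - w.1),
    Polynomial.C w.2 + Polynomial.X * Polynomial.C (p.2 - w.2)]

lemma lg_zero (p w : ℝ × ℝ) :
    lg p w 0 = Polynomial.C w.1 + Polynomial.X * Polynomial.C (p.1 - w.1) := rfl

lemma lg_one (p w : ℝ × ℝ) :
    lg p w 1 = Polynomial.C w.2 + Polynomial.X * Polynomial.C (p.2 - w.2) := rfl

lemma derivative_lg_zero (p w : ℝ × ℝ) :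
    (lg p w 0).derivative = Polynomial.C (p.1 - w.1) := by
  rw [lg_zero]; simp

lemma derivative_lg_one (p w : ℝ × ℝ) :
    (lg p w 1).derivative = Polynomial.C (p.2 - w.2) := by
  rw [lg_one]; simp

/-- Restriction of a bivariate polynomial to the line. -/
noncomputable def lq (F : MvPolynomial (Fin 2) ℝ) (p w : ℝ × ℝ) : Polynomial ℝ :=
  MvPolynomial.aeval (lg p w) F

lemma eval_lq (F : MvPolynomial (Fin 2) ℝ) (p w : ℝ × ℝ) (t : ℝ) :
    (lq F p w).eval t = pev F (w + t • (p - w)) := by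
  have key : (Polynomial.evalRingHom t) (MvPolynomial.eval₂ Polynomial.C (lg p w) F)
      = MvPolynomial.eval₂ ((Polynomial.evalRingHom t).comp Polynomial.C)
        (fun i => (lg p w i).eval t) F := MvPolynomial.eval₂_comp_left _ _ _ _
  have hC : (Polynomial.evalRingHom t).comp Polynomial.C = RingHom.id ℝ := by
    ext x; simp
  rw [lq, MvPolynomial.aeval_def, show algebraMap ℝ (Polynomial ℝ) = Polynomial.C from rfl]
  show (Polynomial.evalRingHom t) (MvPolynomial.eval₂ Polynomial.C (lg p w) F) = _
  have hfun : (fun i => (lg p w i).eval t) = ![(w + t • (p - w)).1, (w + t • (p - w)).2] := by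
    funext i
    fin_cases i <;> simp [lg, Prod.fst_add, Prod.snd_add, Prod.smul_fst, Prod.smul_snd,
      smul_eq_mul] <;> ring
  rw [key, hC, hfun, pev]
  rfl

lemma eval_lq_zero (F : MvPolynomial (Fin 2) ℝ) (p w : ℝ × ℝ) :
    (lq F p w).eval 0 = pev F w := by
  rw [eval_lq]; norm_num

lemma eval_lq_one (F : MvPolynomial (Fin 2) ℝ) (p w : ℝ × ℝ) :
    (lq F p w).eval 1 = pev F p := by
  rw [eval_lq]; norm_num

/-- Chain rule along the line. -/
lemma derivative_lq (F : MvPolynomial (Fin 2) ℝ) (p w : ℝ × ℝ) :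
    (lq F p w).derivative =
      Polynomial.C (p.1 - w.1) * lq (pderiv 0 F) p w
      + Polynomial.C (p.2 - w.2) * lq (pderiv 1 F) p w := by
  unfold lq
  induction F using MvPolynomial.induction_on with
  | C a => simp
  | add f g hf hg => simp only [map_add, hf, hg]; ring
  | mul_X f i hf =>
      obtain rfl | rfl : i = 0 ∨ i = 1 := by omega
      · rw [map_mul, MvPolynomial.aeval_X, Polynomial.derivative_mul, hf,
          pderiv_mul, pderiv_mul, MvPolynomial.pderiv_X_self,
          MvPolynomial.pderiv_X_of_ne (by decide : (0 : Fin 2) ≠ 1)]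
        simp only [map_add, map_mul, map_zero, map_one, mul_one, mul_zero, add_zero,
          MvPolynomial.aeval_X, derivative_lg_zero]
        ring
      · rw [map_mul, MvPolynomial.aeval_X, Polynomial.derivative_mul, hf,
          pderiv_mul, pderiv_mul, MvPolynomial.pderiv_X_self,
          MvPolynomial.pderiv_X_of_ne (by decide : (1 : Fin 2) ≠ 0)]
        simp only [map_add, map_mul, map_zero, map_one, mul_one, mul_zero, add_zero,
          MvPolynomial.aeval_X, derivative_lg_one]
        ring

lemma natDegree_lq_le (F : MvPolynomial (Fin 2) ℝ) (hF : F.totalDegree ≤ 4)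
    (p w : ℝ × ℝ) : (lq F p w).natDegree ≤ 4 := by
  have hg : ∀ i, (lg p w i).natDegree ≤ 1 := by
    intro i
    have key : ∀ a b : ℝ, (Polynomial.C a + Polynomial.X * Polynomial.C b).natDegree ≤ 1 := by
      intro a b
      refine (Polynomial.natDegree_add_le _ _).trans (max_le (by simp) ?_)
      exact (Polynomial.natDegree_mul_le).trans (by simp)
    obtain rfl | rfl : i = 0 ∨ i = 1 := by omega
    · rw [lg_zero]; exact key _ _
    · rw [lg_one]; exact key _ _
  simpa [lq] using MvPolynomial.aeval_natDegree_le F hF (lg p w) hg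

end ManinAux

/-- For a quartic pencil (total degrees ≤ 4) with a double base point `p`
(both polynomials and their first partial derivatives vanish at `p`),
the generalised Manin involution with `D = 4` maps each curve of the pencil to
itself, wherever its defining denominator `−4G₁ − G₂` (which is `den Fa Fb 4 p w`)
is nonzero. -/
theorem manin_involution_preserves_quartic_pencil
    (Fa Fb : MvPolynomial (Fin 2) ℝ)
    (hFa : Fa.totalDegree ≤ 4) (hFb : Fb.totalDegree ≤ 4)
    (p : ℝ × ℝ)
    (hpa : pev Fa p = 0)
    (hpau : pev (pderiv (0 : Fin 2) Fa) p = 0) (hpav : pev (pderiv (1 : Fin 2) Fa) p = 0)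
    (hpb : pev Fb p = 0)
    (hpbu : pev (pderiv (0 : Fin 2) Fb) p = 0) (hpbv : pev (pderiv (1 : Fin 2) Fb) p = 0)
    (w : ℝ × ℝ) (hden : den Fa Fb 4 p w ≠ 0) :
    pev Fa (manin Fa Fb 4 p w) * pev Fb w = pev Fa w * pev Fb (manin Fa Fb 4 p w) := by
  classical
  set A := ManinAux.lq Fa p w with hA
  set B := ManinAux.lq Fb p w with hB
  set h : Polynomial ℝ := Polynomial.C (pev Fb w) * A - Polynomial.C (pev Fa w) * B with hh
  -- degree bounds
  have hdegA : A.natDegree ≤ 4 := ManinAux.natDegree_lq_le Fa hFa p w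
  have hdegB : B.natDegree ≤ 4 := ManinAux.natDegree_lq_le Fb hFb p w
  have hdegh : h.natDegree ≤ 4 := by
    refine (Polynomial.natDegree_sub_le _ _).trans (max_le ?_ ?_) <;>
      exact (Polynomial.natDegree_C_mul_le _ _).trans (by assumption)
  have h5 : h.natDegree < 5 := lt_of_le_of_lt hdegh (by norm_num)
  -- first derivatives along the line
  have hdA := ManinAux.derivative_lq Fa p w
  have hdB := ManinAux.derivative_lq Fb p w
  rw [← hA] at hdA
  rw [← hB] at hdB
  have hdA1 : A.derivative.eval 1 = 0 := by
    rw [hdA]; simp [ManinAux.eval_lq_one, hpau, hpav]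
  have hdB1 : B.derivative.eval 1 = 0 := by
    rw [hdB]; simp [ManinAux.eval_lq_one, hpbu, hpbv]
  have hdA0 : A.derivative.eval 0 = d1 Fa p w := by
    rw [hdA]; simp [ManinAux.eval_lq_zero, d1]
  have hdB0 : B.derivative.eval 0 = d1 Fb p w := by
    rw [hdB]; simp [ManinAux.eval_lq_zero, d1]
  -- second derivatives along the line, at 0
  have hddA0 : (A.derivative.derivative).eval 0 = d2 Fa p w := by
    rw [hdA, Polynomial.derivative_add, Polynomial.derivative_mul, Polynomial.derivative_mul,
      Polynomial.derivative_C, Polynomial.derivative_C, zero_mul, zero_add, zero_mul, zero_add,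
      ManinAux.derivative_lq, ManinAux.derivative_lq, ManinAux.pderiv_comm 0 1 Fa]
    simp only [Polynomial.eval_add, Polynomial.eval_mul, Polynomial.eval_C,
      ManinAux.eval_lq_zero]
    rw [d2]; ring
  have hddB0 : (B.derivative.derivative).eval 0 = d2 Fb p w := by
    rw [hdB, Polynomial.derivative_add, Polynomial.derivative_mul, Polynomial.derivative_mul,
      Polynomial.derivative_C, Polynomial.derivative_C, zero_mul, zero_add, zero_mul, zero_add,
      ManinAux.derivative_lq, ManinAux.derivative_lq, ManinAux.pderiv_comm 0 1 Fb]
    simp only [Polynomial.eval_add, Polynomial.eval_mul, Polynomial.eval_C,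
      ManinAux.eval_lq_zero]
    rw [d2]; ring
  -- coefficient facts for h
  have hc0 : h.coeff 0 = 0 := by
    rw [Polynomial.coeff_zero_eq_eval_zero, hh]
    simp [hA, hB, ManinAux.eval_lq_zero]
    ring
  have hdh : Polynomial.derivative h
      = Polynomial.C (pev Fb w) * A.derivative - Polynomial.C (pev Fa w) * B.derivative := by
    rw [hh]
    simp [Polynomial.derivative_mul]
  have hG1 : G1 Fa Fb p w = -h.coeff 1 := by
    have e0 : (Polynomial.derivative h).eval 0
        = pev Fb w * d1 Fa p w - pev Fa w * d1 Fb p w := by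
      rw [hdh]; simp [hdA0, hdB0]
    rw [← Polynomial.coeff_zero_eq_eval_zero, Polynomial.coeff_derivative] at e0
    rw [G1]
    push_cast at e0
    linarith
  have hG2 : G2 Fa Fb p w = -(2 * h.coeff 2) := by
    have e0 : (Polynomial.derivative (Polynomial.derivative h)).eval 0
        = pev Fb w * d2 Fa p w - pev Fa w * d2 Fb p w := by
      rw [hdh]
      simp only [Polynomial.derivative_sub, Polynomial.derivative_mul,
        Polynomial.derivative_C, zero_mul, zero_add, Polynomial.eval_sub,
        Polynomial.eval_mul, Polynomial.eval_C, hddA0, hddB0]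
    rw [← Polynomial.coeff_zero_eq_eval_zero, Polynomial.coeff_derivative,
      Polynomial.coeff_derivative] at e0
    rw [G2]
    push_cast at e0
    linarith
  have he1 : h.eval 1 = 0 := by
    rw [hh]
    simp [hA, hB, ManinAux.eval_lq_one, hpa, hpb]
  have hde1 : (Polynomial.derivative h).eval 1 = 0 := by
    rw [hdh]; simp [hdA1, hdB1]
  -- sum relations among the coefficients
  have hsum1 : h.coeff 1 + h.coeff 2 + h.coeff 3 + h.coeff 4 = 0 := by
    have := Polynomial.eval_eq_sum_range' h5 (1 : ℝ)
    rw [he1] at this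
    simp [Finset.sum_range_succ, hc0] at this
    linarith
  have hd5 : (Polynomial.derivative h).natDegree < 5 :=
    lt_of_le_of_lt ((Polynomial.natDegree_derivative_le h).trans
      (Nat.sub_le_sub_right hdegh 1)) (by norm_num)
  have hsum2 : h.coeff 1 + 2 * h.coeff 2 + 3 * h.coeff 3 + 4 * h.coeff 4 = 0 := by
    have hc5 : h.coeff 5 = 0 := Polynomial.coeff_eq_zero_of_natDegree_lt (by omega)
    have := Polynomial.eval_eq_sum_range' hd5 (1 : ℝ)
    rw [hde1] at this
    simp [Finset.sum_range_succ, Polynomial.coeff_derivative] at this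
    push_cast at this
    linarith
  -- the denominator equals 2·c₄
  have hdenval : den Fa Fb 4 p w = 2 * h.coeff 4 := by
    rw [den, hG1, hG2]
    push_cast
    linarith
  have hc4 : h.coeff 4 ≠ 0 := by
    intro hc
    apply hden
    rw [hdenval, hc, mul_zero]
  -- the involution parameter
  set z := 2 * G1 Fa Fb p w / den Fa Fb 4 p w with hzdef
  have hzval : z = -h.coeff 1 / h.coeff 4 := by
    rw [hzdef, hdenval, hG1]
    rw [show (2 : ℝ) * -h.coeff 1 = 2 * (-h.coeff 1) from rfl,
      mul_div_mul_left _ _ (two_ne_zero)]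
  have hman : manin Fa Fb 4 p w = w + z • (p - w) := rfl
  have hevA : pev Fa (manin Fa Fb 4 p w) = A.eval z := by
    rw [hman, hA, ManinAux.eval_lq]
  have hevB : pev Fb (manin Fa Fb 4 p w) = B.eval z := by
    rw [hman, hB, ManinAux.eval_lq]
  -- the key vanishing
  have hhz : h.eval z = pev Fb w * A.eval z - pev Fa w * B.eval z := by
    rw [hh]; simp
  have key : h.eval z = 0 := by
    have hexp := Polynomial.eval_eq_sum_range' h5 z
    rw [hexp]
    simp only [Finset.sum_range_succ, Finset.sum_range_zero, zero_add, hc0, zero_mul]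
    have hc2 : h.coeff 2 = h.coeff 4 - 2 * h.coeff 1 := by linarith
    have hc3 : h.coeff 3 = h.coeff 1 - 2 * h.coeff 4 := by linarith
    rw [hc2, hc3, hzval]
    field_simp
    ring
  rw [hevA, hevB]
  rw [hhz] at key
  linarith
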